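/- In a non-degenerate Clifford algebra Cl(p,q,0) with n = p+q odd, the centralizer of the grade-1 subspace equals the direct sum of the scalars and the grade-n subspace (the span of the product of all n generators). -/

import Mathlib

open CliffordAlgebra

noncomputable section

/-- Diagonal weights: `p` entries `+1`, `q` entries `-1`, `r` entries `0`. -/
def cliffSig (p q : ℕ) (i : ℕ) : ℝ := if i < p then 1 else if i < p + q then -1 else 0

/-- The quadratic form of signature `(p, q, r)` on `ℝ^(p+q+r)`. -/
def Qf (p q r : ℕ) : QuadraticForm ℝ (Fin (p + q + r) → ℝ) :=
  QuadraticMap.weightedSumSquares ℝ (fun i : Fin (p + q + r) => cliffSig p q (i : ℕ))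

/-- The `i`-th generator `e_i` of `Cl(p,q,r)`. -/
def gen (p q r : ℕ) (i : Fin (p + q + r)) : CliffordAlgebra (Qf p q r) :=
  ι (Qf p q r) (Pi.single i 1)

/-- The grade-`m` subspace `Cl^m(p,q,r)`: span of products of `m` distinct generators
with increasing indices. -/
def gradeSubspace (p q r m : ℕ) : Submodule ℝ (CliffordAlgebra (Qf p q r)) :=
  Submodule.span ℝ {x | ∃ l : List (Fin (p + q + r)),
    l.Chain' (· < ·) ∧ l.length = m ∧ x = (l.map (gen p q r)).prod}

/-- `Λ_r`: the subalgebra generated by the `r` null generators. -/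
def LambdaR (p q r : ℕ) : Subalgebra ℝ (CliffordAlgebra (Qf p q r)) :=
  Algebra.adjoin ℝ {x | ∃ i : Fin (p + q + r), p + q ≤ (i : ℕ) ∧ x = gen p q r i}

/-- `Λ^d_r`: the degree-`d` component of `Λ_r`. -/
def LambdaDeg (p q r d : ℕ) : Submodule ℝ (CliffordAlgebra (Qf p q r)) :=
  Submodule.span ℝ {x | ∃ l : List (Fin (p + q + r)),
    l.Chain' (· < ·) ∧ l.length = d ∧ (∀ i ∈ l, p + q ≤ (i : ℕ)) ∧
    x = (l.map (gen p q r)).prod}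

/-- The pseudoscalar `e_1 ⋯ e_n`. -/
def pseudoscalar (p q r : ℕ) : CliffordAlgebra (Qf p q r) :=
  ((List.finRange (p + q + r)).map (gen p q r)).prod

namespace Aux11

variable {N : ℕ}

/-- sign of toggling `i` past the elements of `S` smaller than `i` -/
def eps (i : Fin N) (S : Finset (Fin N)) : ℝ := ∏ j ∈ S, (if j < i then -1 else 1)

lemma eps_mul_self (i : Fin N) (S : Finset (Fin N)) : eps i S * eps i S = 1 := by
  rw [eps, ← Finset.prod_mul_distrib]
  refine Finset.prod_eq_one fun j _ => by split <;> norm_num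

lemma eps_insert {j : Fin N} {S : Finset (Fin N)} (h : j ∉ S) (i : Fin N) :
    eps i (insert j S) = (if j < i then -1 else 1) * eps i S :=
  Finset.prod_insert h

lemma eps_erase {j : Fin N} {S : Finset (Fin N)} (h : j ∈ S) (i : Fin N) :
    eps i (S.erase j) = (if j < i then -1 else 1) * eps i S := by
  have h1 : eps i S = (if j < i then -1 else 1) * eps i (S.erase j) := by
    conv_lhs => rw [← Finset.insert_erase h, eps_insert (Finset.notMem_erase _ _)]
  rw [h1]
  have : (if j < i then (-1:ℝ) else 1) * (if j < i then -1 else 1) = 1 := by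
    split <;> norm_num
  rw [← mul_assoc, this, one_mul]

lemma eps_eq_one {i : Fin N} {S : Finset (Fin N)} (h : ∀ j ∈ S, ¬ j < i) : eps i S = 1 :=
  Finset.prod_eq_one fun j hj => if_neg (h j hj)

variable (w : Fin N → ℝ)

/-- creation + annihilation operator -/
def Mop (i : Fin N) : (Finset (Fin N) → ℝ) →ₗ[ℝ] (Finset (Fin N) → ℝ) where
  toFun f S := eps i S * (if i ∈ S then f (S.erase i) else w i * f (insert i S))
  map_add' f g := by funext S; by_cases h : i ∈ S <;> simp [h] <;> ring
  map_smul' c f := by funext S; by_cases h : i ∈ S <;> simp [h] <;> ring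

lemma Mop_apply (i : Fin N) (f : Finset (Fin N) → ℝ) (S : Finset (Fin N)) :
    Mop w i f S = eps i S * (if i ∈ S then f (S.erase i) else w i * f (insert i S)) := rfl

lemma Mop_mul_self (i : Fin N) : (Mop w i * Mop w i : Module.End ℝ _) = w i • 1 := by
  refine LinearMap.ext fun f => funext fun S => ?_
  rw [Module.End.mul_apply, Mop_apply]
  by_cases h : i ∈ S
  · rw [if_pos h, Mop_apply, if_neg (Finset.notMem_erase _ _),
      eps_erase h, Finset.insert_erase h]
    simp only [lt_irrefl, if_false, one_mul]
    rw [← mul_assoc, eps_mul_self]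
    simp [mul_comm]
  · rw [if_neg h, Mop_apply, if_pos (Finset.mem_insert_self _ _),
      eps_insert h, Finset.erase_insert h]
    simp only [lt_irrefl, if_false, one_mul]
    rw [show eps i S * (w i * (eps i S * f S)) = (eps i S * eps i S) * (w i * f S) by ring,
      eps_mul_self]
    simp [mul_comm]

lemma sign_opp {i j : Fin N} (h : i ≠ j) :
    (if j < i then (-1:ℝ) else 1) = -(if i < j then -1 else 1) := by
  rcases lt_trichotomy i j with hc | hc | hc
  · rw [if_neg (asymm hc), if_pos hc]; norm_num
  · exact absurd hc h
  · rw [if_pos hc, if_neg (asymm hc)]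

lemma Mop_anticomm {i j : Fin N} (h : i ≠ j) :
    (Mop w i * Mop w j : Module.End ℝ _) = -(Mop w j * Mop w i) := by
  refine LinearMap.ext fun f => funext fun S => ?_
  simp only [Module.End.mul_apply, LinearMap.neg_apply, Pi.neg_apply]
  by_cases hi : i ∈ S <;> by_cases hj : j ∈ S
  · rw [Mop_apply, if_pos hi, Mop_apply, if_pos (Finset.mem_erase.2 ⟨h.symm, hj⟩),
      Mop_apply w j, if_pos hj, Mop_apply, if_pos (Finset.mem_erase.2 ⟨h, hi⟩),
      eps_erase hi j, eps_erase hj i, Finset.erase_right_comm (a := i),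
      sign_opp h]
    ring
  · rw [Mop_apply, if_pos hi, Mop_apply, if_neg (fun hc => hj (Finset.mem_of_mem_erase hc)),
      Mop_apply w j, if_neg hj, Mop_apply, if_pos (Finset.mem_insert_of_mem hi),
      eps_erase hi j, eps_insert hj i,
      Finset.erase_insert_of_ne (Ne.symm h), sign_opp h]
    ring
  · rw [Mop_apply, if_neg hi, Mop_apply, if_pos (Finset.mem_insert_of_mem hj),
      Mop_apply w j, if_pos hj, Mop_apply,
      if_neg (fun hc => hi (Finset.mem_of_mem_erase hc)),
      eps_insert hi j, eps_erase hj i,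
      Finset.erase_insert_of_ne h, sign_opp h]
    ring
  · rw [Mop_apply, if_neg hi, Mop_apply,
      if_neg (fun hc => hj ((Finset.mem_insert.1 hc).resolve_left h.symm)),
      Mop_apply w j, if_neg hj, Mop_apply,
      if_neg (fun hc => hi ((Finset.mem_insert.1 hc).resolve_left h)),
      eps_insert hi j, eps_insert hj i,
      Finset.insert_comm, sign_opp h]
    ring

lemma Mop_single {i : Fin N} {T : Finset (Fin N)} (hi : i ∉ T) (h : ∀ j ∈ T, ¬ j < i) :
    Mop w i (Pi.single T 1) = Pi.single (insert i T) (1:ℝ) := by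
  funext S
  rw [Mop_apply]
  by_cases hS : S = insert i T
  · subst hS
    rw [if_pos (Finset.mem_insert_self _ _), Finset.erase_insert hi, Pi.single_eq_same,
      Pi.single_eq_same, eps_eq_one, one_mul]
    intro j hj
    rcases Finset.mem_insert.1 hj with rfl | hj
    · exact lt_irrefl _
    · exact h j hj
  · rw [Pi.single_eq_of_ne hS]
    by_cases hiS : i ∈ S
    · rw [if_pos hiS, Pi.single_apply, if_neg, mul_zero]
      intro hval
      exact hS (by rw [← Finset.insert_erase hiS, hval])
    · rw [if_neg hiS, Pi.single_apply, if_neg, mul_zero, mul_zero]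
      intro hval
      exact hi (hval ▸ Finset.mem_insert_self i S)

/-- the linear map `v ↦ Σ v i • Mop i` -/
def mdl : (Fin N → ℝ) →ₗ[ℝ] Module.End ℝ (Finset (Fin N) → ℝ) where
  toFun v := ∑ i, v i • Mop w i
  map_add' u v := by simp [add_smul, Finset.sum_add_distrib]
  map_smul' c v := by simp [smul_smul, Finset.smul_sum]

lemma mdl_single (i : Fin N) : mdl w (Pi.single i 1) = Mop w i := by
  rw [mdl, LinearMap.coe_mk, AddHom.coe_mk, Finset.sum_eq_single i]
  · rw [Pi.single_eq_same, one_smul]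
  · intro j _ hj
    rw [Pi.single_eq_of_ne hj, zero_smul]
  · intro hc
    exact absurd (Finset.mem_univ i) hc

lemma mdl_sq (v : Fin N → ℝ) :
    mdl w v * mdl w v = algebraMap ℝ (Module.End ℝ (Finset (Fin N) → ℝ))
      (∑ i, w i * (v i * v i)) := by
  have expand : mdl w v * mdl w v
      = ∑ i, ∑ j, (v i * v j) • (Mop w i * Mop w j : Module.End ℝ _) := by
    rw [mdl, LinearMap.coe_mk, AddHom.coe_mk, Finset.sum_mul_sum]
    refine Finset.sum_congr rfl fun i _ => Finset.sum_congr rfl fun j _ => ?_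
    rw [smul_mul_assoc, mul_smul_comm, smul_smul]
  have double : mdl w v * mdl w v + mdl w v * mdl w v
      = ∑ i, (2 * (w i * (v i * v i))) • (1 : Module.End ℝ _) := by
    rw [expand]
    nth_rewrite 2 [Finset.sum_comm]
    rw [← Finset.sum_add_distrib]
    refine Finset.sum_congr rfl fun i _ => ?_
    rw [← Finset.sum_add_distrib, Finset.sum_eq_single i]
    · rw [Mop_mul_self, smul_smul, ← add_smul]
      congr 1
      ring
    · intro j _ hj
      rw [Mop_anticomm w (Ne.symm hj), smul_neg, mul_comm (v i) (v j)]
      exact neg_add_cancel _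
    · intro hc
      exact absurd (Finset.mem_univ i) hc
  have h2 : (2:ℝ) ≠ 0 := two_ne_zero
  have : (2:ℝ) • (mdl w v * mdl w v)
      = (2:ℝ) • (algebraMap ℝ (Module.End ℝ (Finset (Fin N) → ℝ)) (∑ i, w i * (v i * v i))) := by
    rw [two_smul, double, Algebra.algebraMap_eq_smul_one, Finset.sum_smul, two_smul,
      ← Finset.sum_add_distrib]
    refine Finset.sum_congr rfl fun i _ => ?_
    rw [two_mul, add_smul]
  exact smul_right_injective _ h2 this

variable (p q : ℕ)

def wt (i : Fin (p + q + 0)) : ℝ := cliffSig p q (i : ℕ)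

lemma wt_mul_self (i : Fin (p + q + 0)) : wt p q i * wt p q i = 1 := by
  have hi : (i : ℕ) < p + q := i.isLt
  by_cases h1 : (i : ℕ) < p
  · simp [wt, cliffSig, h1]
  · simp [wt, cliffSig, h1, hi]

lemma wt_ne_zero (i : Fin (p + q + 0)) : wt p q i ≠ 0 := by
  intro h
  have := wt_mul_self p q i
  rw [h, mul_zero] at this
  norm_num at this

lemma Qf_single (i : Fin (p + q + 0)) : Qf p q 0 (Pi.single i 1) = wt p q i := by
  rw [Qf, QuadraticMap.weightedSumSquares_apply, Finset.sum_eq_single i]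
  · rw [Pi.single_eq_same, mul_one, smul_eq_mul, mul_one, wt]
  · intro j _ hj
    rw [Pi.single_eq_of_ne hj, mul_zero, smul_zero]
  · intro hc
    exact absurd (Finset.mem_univ i) hc

lemma polar_single {i j : Fin (p + q + 0)} (h : i ≠ j) :
    QuadraticMap.polar (Qf p q 0) (Pi.single i 1) (Pi.single j 1) = 0 := by
  rw [QuadraticMap.polar, Qf, QuadraticMap.weightedSumSquares_apply,
    QuadraticMap.weightedSumSquares_apply, QuadraticMap.weightedSumSquares_apply,
    ← Finset.sum_sub_distrib, ← Finset.sum_sub_distrib]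
  refine Finset.sum_eq_zero fun k _ => ?_
  simp only [Pi.add_apply, Pi.single_apply, smul_eq_mul]
  by_cases hk : k = i
  · subst hk
    rw [if_pos rfl, if_neg h]
    ring
  · by_cases hk' : k = j
    · subst hk'
      rw [if_neg hk, if_pos rfl]
      ring
    · rw [if_neg hk, if_neg hk']
      ring

lemma gen_mul_self (i : Fin (p + q + 0)) :
    gen p q 0 i * gen p q 0 i = algebraMap ℝ _ (wt p q i) := by
  rw [gen, ι_sq_scalar, Qf_single]

lemma gen_anticomm {i j : Fin (p + q + 0)} (h : i ≠ j) :
    gen p q 0 i * gen p q 0 j = -(gen p q 0 j * gen p q 0 i) := by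
  have h2 := CliffordAlgebra.ι_mul_ι_add_swap (Q := Qf p q 0) (Pi.single i 1) (Pi.single j 1)
  rw [polar_single p q h, map_zero] at h2
  exact eq_neg_of_add_eq_zero_left h2

def rho : CliffordAlgebra (Qf p q 0) →ₐ[ℝ] Module.End ℝ (Finset (Fin (p + q + 0)) → ℝ) :=
  CliffordAlgebra.lift (Qf p q 0) ⟨mdl (wt p q), fun v => by
    rw [mdl_sq]
    congr 1
    rw [Qf, QuadraticMap.weightedSumSquares_apply]
    exact Finset.sum_congr rfl fun i _ => by rw [smul_eq_mul]; rfl⟩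

lemma rho_gen (i : Fin (p + q + 0)) : rho p q (gen p q 0 i) = Mop (wt p q) i := by
  rw [gen, rho, CliffordAlgebra.lift_ι_apply, mdl_single]

def coeff : CliffordAlgebra (Qf p q 0) →ₗ[ℝ] (Finset (Fin (p + q + 0)) → ℝ) where
  toFun x := rho p q x (Pi.single ∅ 1)
  map_add' x y := by simp only [map_add, LinearMap.add_apply]
  map_smul' c x := by simp only [map_smul, LinearMap.smul_apply, RingHom.id_apply]

lemma coeff_prod : ∀ (l : List (Fin (p + q + 0))), l.Pairwise (· < ·) →
    coeff p q ((l.map (gen p q 0)).prod) = Pi.single l.toFinset 1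
  | [], _ => by
      simp only [List.map_nil, List.prod_nil, List.toFinset_nil]
      show rho p q 1 (Pi.single ∅ 1) = _
      rw [map_one, Module.End.one_apply]
  | i :: l, hl => by
      rw [List.map_cons, List.prod_cons]
      show rho p q (gen p q 0 i * _) (Pi.single ∅ 1) = _
      rw [map_mul, rho_gen, Module.End.mul_apply,
        show rho p q ((l.map (gen p q 0)).prod) (Pi.single ∅ 1) = Pi.single l.toFinset 1 from
          coeff_prod l (List.pairwise_cons.1 hl).2,
        Mop_single, List.toFinset_cons]
      · intro hc
        exact lt_irrefl i ((List.pairwise_cons.1 hl).1 i (List.mem_toFinset.1 hc))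
      · intro j hj
        exact lt_asymm ((List.pairwise_cons.1 hl).1 j (List.mem_toFinset.1 hj))

def bT (T : Finset (Fin (p + q + 0))) : CliffordAlgebra (Qf p q 0) :=
  ((T.sort (· ≤ ·)).map (gen p q 0)).prod

lemma coeff_bT (T : Finset (Fin (p + q + 0))) : coeff p q (bT p q T) = Pi.single T 1 := by
  rw [bT, coeff_prod p q _ (Finset.sortedLT_sort T).pairwise, Finset.sort_toFinset]

lemma bT_li : LinearIndependent ℝ (bT p q) := by
  have h1 : LinearIndependent ℝ (fun T : Finset (Fin (p + q + 0)) => Pi.single T (1:ℝ)) := by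
    have h0 := (Pi.basisFun ℝ (Finset (Fin (p + q + 0)))).linearIndependent
    have he : ⇑(Pi.basisFun ℝ (Finset (Fin (p + q + 0))))
        = fun T : Finset (Fin (p + q + 0)) => Pi.single T (1:ℝ) :=
      funext fun T => Pi.basisFun_apply ℝ _ T
    rwa [he] at h0
  refine LinearIndependent.of_comp (coeff p q) ?_
  have : (coeff p q) ∘ (bT p q) = fun T => Pi.single T 1 := funext fun T => coeff_bT p q T
  rw [this]
  exact h1

lemma sort_toFinset_eq {l : List (Fin (p + q + 0))} (hl : l.Pairwise (· < ·)) :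
    Finset.sort l.toFinset (· ≤ ·) = l :=
  (List.toFinset_sort (· ≤ ·) (hl.imp fun h => ne_of_lt h)).2 (hl.imp fun h => le_of_lt h)

lemma prod_eq_bT {l : List (Fin (p + q + 0))} (hl : l.Pairwise (· < ·)) :
    (l.map (gen p q 0)).prod = bT p q l.toFinset := by
  rw [bT, sort_toFinset_eq p q hl]

lemma gen_mul_prod_mem (i : Fin (p + q + 0)) :
    ∀ (T : List (Fin (p + q + 0))), T.Pairwise (· < ·) →
    gen p q 0 i * (T.map (gen p q 0)).prod ∈ Submodule.span ℝ
      {x | ∃ S : List (Fin (p + q + 0)), S.Pairwise (· < ·) ∧ (∀ a ∈ S, i ≤ a ∨ a ∈ T) ∧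
        x = (S.map (gen p q 0)).prod}
  | [], _ => by
      refine Submodule.subset_span ⟨[i], ?_, ?_, ?_⟩
      · simp
      · intro a ha
        rw [List.mem_singleton] at ha
        exact Or.inl (le_of_eq ha.symm)
      · simp
  | j :: T', hT => by
      rw [List.map_cons, List.prod_cons, ← mul_assoc]
      rcases lt_trichotomy i j with hij | rfl | hij
      · refine Submodule.subset_span ⟨i :: j :: T', ?_, ?_, ?_⟩
        · refine List.pairwise_cons.2 ⟨?_, hT⟩
          intro a ha
          rcases List.mem_cons.1 ha with rfl | ha
          · exact hij
          · exact lt_trans hij ((List.pairwise_cons.1 hT).1 a ha)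
        · intro a ha
          rcases List.mem_cons.1 ha with rfl | ha
          · exact Or.inl le_rfl
          · exact Or.inr ha
        · rw [List.map_cons, List.prod_cons, List.map_cons, List.prod_cons, mul_assoc]
      · rw [gen_mul_self, ← Algebra.smul_def]
        exact Submodule.smul_mem _ _ (Submodule.subset_span
          ⟨T', (List.pairwise_cons.1 hT).2,
            fun a ha => Or.inr (List.mem_cons_of_mem _ ha), rfl⟩)
      · rw [gen_anticomm p q (ne_of_gt hij), neg_mul, mul_assoc]
        refine Submodule.neg_mem _ ?_
        have hmem := gen_mul_prod_mem i T' (List.pairwise_cons.1 hT).2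
        refine Submodule.span_induction
          (p := fun z _ => gen p q 0 j * z ∈ Submodule.span ℝ
            {x | ∃ S : List (Fin (p + q + 0)), S.Pairwise (· < ·) ∧
              (∀ a ∈ S, i ≤ a ∨ a ∈ j :: T') ∧ x = (S.map (gen p q 0)).prod})
          ?_ ?_ ?_ ?_ hmem
        · rintro z ⟨S, hS, hSel, rfl⟩
          try dsimp only
          have hjS : ∀ a ∈ S, j < a := by
            intro a ha
            rcases hSel a ha with h1 | h1
            · exact lt_of_lt_of_le hij h1
            · exact (List.pairwise_cons.1 hT).1 a h1
          refine Submodule.subset_span ⟨j :: S, List.pairwise_cons.2 ⟨hjS, hS⟩, ?_, ?_⟩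
          · intro a ha
            rcases List.mem_cons.1 ha with rfl | ha
            · exact Or.inr (List.mem_cons_self)
            · rcases hSel a ha with h1 | h1
              · exact Or.inl h1
              · exact Or.inr (List.mem_cons_of_mem _ h1)
          · rw [List.map_cons, List.prod_cons]
        · try dsimp only
          rw [mul_zero]
          exact Submodule.zero_mem _
        · intro x y _ _ hx hy
          rw [mul_add]
          exact Submodule.add_mem _ hx hy
        · intro c x _ hx
          rw [mul_smul_comm]
          exact Submodule.smul_mem _ _ hx

def NN : Submodule ℝ (CliffordAlgebra (Qf p q 0)) := Submodule.span ℝ (Set.range (bT p q))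

lemma gen_mul_mem_NN (i : Fin (p + q + 0)) {x} (hx : x ∈ NN p q) :
    gen p q 0 i * x ∈ NN p q := by
  refine Submodule.span_induction (p := fun y _ => gen p q 0 i * y ∈ NN p q) ?_ ?_ ?_ ?_ hx
  · rintro y ⟨T, rfl⟩
    try dsimp only
    have h1 := gen_mul_prod_mem p q i (T.sort (· ≤ ·)) (Finset.sortedLT_sort T).pairwise
    rw [bT]
    refine Submodule.span_le.2 ?_ h1
    rintro z ⟨S, hS, -, rfl⟩
    exact Submodule.subset_span ⟨S.toFinset, (prod_eq_bT p q hS).symm⟩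
  · try dsimp only
    rw [mul_zero]
    exact Submodule.zero_mem _
  · intro x y _ _ hx hy
    rw [mul_add]
    exact Submodule.add_mem _ hx hy
  · intro c x _ hx
    rw [mul_smul_comm]
    exact Submodule.smul_mem _ _ hx

lemma iota_eq_sum (v : Fin (p + q + 0) → ℝ) :
    ι (Qf p q 0) v = ∑ i, v i • gen p q 0 i := by
  have hv : v = ∑ i, v i • (Pi.single i 1 : Fin (p + q + 0) → ℝ) := by
    have h0 := Finset.univ_sum_single v
    conv_lhs => rw [← h0]
    refine Finset.sum_congr rfl fun i _ => ?_
    rw [← Pi.single_smul, smul_eq_mul, mul_one]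
  conv_lhs => rw [hv]
  rw [map_sum]
  exact Finset.sum_congr rfl fun i _ => by rw [map_smul, gen]

lemma iota_mul_mem_NN (v : Fin (p + q + 0) → ℝ) {x} (hx : x ∈ NN p q) :
    ι (Qf p q 0) v * x ∈ NN p q := by
  rw [iota_eq_sum, Finset.sum_mul]
  refine Submodule.sum_mem _ fun i _ => ?_
  rw [smul_mul_assoc]
  exact Submodule.smul_mem _ _ (gen_mul_mem_NN p q i hx)

lemma one_mem_NN : (1 : CliffordAlgebra (Qf p q 0)) ∈ NN p q := by
  have h1 : (1 : CliffordAlgebra (Qf p q 0)) = bT p q ∅ := by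
    rw [bT, Finset.sort_empty, List.map_nil, List.prod_nil]
  rw [h1]
  exact Submodule.subset_span ⟨∅, rfl⟩

lemma prod_mul_mem_NN : ∀ (l : List (Fin (p + q + 0))) {y}, y ∈ NN p q →
    (l.map (gen p q 0)).prod * y ∈ NN p q
  | [], y, hy => by rwa [List.map_nil, List.prod_nil, one_mul]
  | i :: l, y, hy => by
      rw [List.map_cons, List.prod_cons, mul_assoc]
      exact gen_mul_mem_NN p q i (prod_mul_mem_NN l hy)

lemma NN_top (x : CliffordAlgebra (Qf p q 0)) : x ∈ NN p q := by
  induction x using CliffordAlgebra.induction with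
  | algebraMap r =>
      rw [Algebra.algebraMap_eq_smul_one]
      exact Submodule.smul_mem _ _ (one_mem_NN p q)
  | ι v =>
      rw [← mul_one (ι (Qf p q 0) v)]
      exact iota_mul_mem_NN p q v (one_mem_NN p q)
  | mul x y hx hy =>
      refine Submodule.span_induction (p := fun z _ => z * y ∈ NN p q) ?_ ?_ ?_ ?_ hx
      · rintro z ⟨T, rfl⟩
        try dsimp only
        rw [bT]
        exact prod_mul_mem_NN p q _ hy
      · try dsimp only
        rw [zero_mul]
        exact Submodule.zero_mem _
      · intro a b _ _ ha hb
        rw [add_mul]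
        exact Submodule.add_mem _ ha hb
      · intro c a _ ha
        rw [smul_mul_assoc]
        exact Submodule.smul_mem _ _ ha
  | add x y hx hy => exact Submodule.add_mem _ hx hy

lemma comm_gen_prod (i : Fin (p + q + 0)) :
    ∀ (l : List (Fin (p + q + 0))),
      gen p q 0 i * (l.map (gen p q 0)).prod
        = ((-1:ℝ) ^ (l.filter (· ≠ i)).length) • ((l.map (gen p q 0)).prod * gen p q 0 i)
  | [] => by simp
  | j :: l => by
      rw [List.map_cons, List.prod_cons, ← mul_assoc]
      by_cases hj : j = i
      · subst hj
        rw [show ((j :: l).filter (· ≠ j)) = l.filter (· ≠ j) by simp,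
          gen_mul_self, ← Algebra.smul_def, comm_gen_prod j l, smul_mul_assoc, smul_smul,
          ← pow_add, show (l.filter (· ≠ j)).length + (l.filter (· ≠ j)).length
              = 2 * (l.filter (· ≠ j)).length by ring,
          pow_mul, neg_one_sq, one_pow, one_smul, mul_assoc, gen_mul_self,
          ← Algebra.commutes, ← Algebra.smul_def]
      · rw [show ((j :: l).filter (· ≠ i)) = j :: l.filter (· ≠ i) by simp [hj],
          List.length_cons, gen_anticomm p q (fun hc => hj hc.symm), neg_mul, mul_assoc,
          comm_gen_prod i l, mul_smul_comm, ← neg_smul,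
          show (-((-1:ℝ) ^ (l.filter (· ≠ i)).length)
            = (-1:ℝ) ^ ((l.filter (· ≠ i)).length + 1)) by rw [pow_succ]; ring,
          mul_assoc]

lemma gen_mul_bT (i : Fin (p + q + 0)) (T : Finset (Fin (p + q + 0))) :
    gen p q 0 i * bT p q T = ((-1:ℝ) ^ (T.erase i).card) • (bT p q T * gen p q 0 i) := by
  have hlen : ((T.sort (· ≤ ·)).filter (· ≠ i)).length = (T.erase i).card := by
    have hnd : (T.sort (· ≤ ·)).Nodup := T.sort_nodup (· ≤ ·)
    rw [← List.toFinset_card_of_nodup (hnd.filter _), List.toFinset_filter,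
      Finset.sort_toFinset]
    congr 1
    ext a
    simp [Finset.mem_erase, and_comm]
  rw [bT, comm_gen_prod p q i, hlen]

lemma bT_empty : bT p q ∅ = 1 := by
  rw [bT, Finset.sort_empty, List.map_nil, List.prod_nil]

lemma bT_univ : bT p q Finset.univ = pseudoscalar p q 0 := by
  rw [bT, pseudoscalar, ← List.toFinset_finRange (p + q + 0),
    sort_toFinset_eq p q (List.sortedLT_finRange _).pairwise]

def BB : Module.Basis (Finset (Fin (p + q + 0))) ℝ (CliffordAlgebra (Qf p q 0)) :=
  Module.Basis.mk (bT_li p q) (fun x _ => NN_top p q x)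

lemma BB_apply (T : Finset (Fin (p + q + 0))) : BB p q T = bT p q T := by
  unfold BB
  exact Module.Basis.mk_apply _ _ _

lemma repr_sum (c : Finset (Fin (p + q + 0)) → ℝ) (T : Finset (Fin (p + q + 0))) :
    (BB p q).repr (∑ T', c T' • bT p q T') T = c T := by
  rw [Finset.sum_congr rfl (fun T' _ => by rw [← BB_apply p q T'] :
      ∀ T' ∈ Finset.univ, c T' • bT p q T' = c T' • BB p q T'), map_sum,
    Finset.sum_congr rfl (fun T' _ => by rw [map_smul, Module.Basis.repr_self] :
      ∀ T' ∈ Finset.univ, (BB p q).repr (c T' • BB p q T')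
        = c T' • Finsupp.single T' (1:ℝ)),
    Finsupp.finset_sum_apply, Finset.sum_eq_single T]
  · rw [Finsupp.smul_apply, Finsupp.single_eq_same, smul_eq_mul, mul_one]
  · intro T' _ hT'
    rw [Finsupp.smul_apply, Finsupp.single_eq_of_ne hT'.symm, smul_zero]
  · intro hc
    exact absurd (Finset.mem_univ T) hc

lemma sum_repr_bT (X : CliffordAlgebra (Qf p q 0)) :
    ∑ T', (BB p q).repr X T' • bT p q T' = X := by
  conv_rhs => rw [← (BB p q).sum_repr X]
  exact Finset.sum_congr rfl fun T' _ => by rw [BB_apply]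

lemma sum_mul_geni (c : Finset (Fin (p + q + 0)) → ℝ) (i : Fin (p + q + 0)) :
    (∑ T', c T' • (bT p q T' * gen p q 0 i)) * gen p q 0 i
      = ∑ T', (c T' * wt p q i) • bT p q T' := by
  rw [Finset.sum_mul]
  refine Finset.sum_congr rfl fun T' _ => ?_
  rw [smul_mul_assoc, mul_assoc, gen_mul_self, ← Algebra.commutes, ← Algebra.smul_def,
    smul_smul]

lemma gen_comm_pseudo (hn : Odd (p + q)) (i : Fin (p + q + 0)) :
    gen p q 0 i * pseudoscalar p q 0 = pseudoscalar p q 0 * gen p q 0 i := by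
  have hlen : ((List.finRange (p + q + 0)).filter (· ≠ i)).length = p + q - 1 := by
    have hnd := List.nodup_finRange (p + q + 0)
    rw [← List.toFinset_card_of_nodup (hnd.filter _), List.toFinset_filter,
      List.toFinset_finRange]
    have h2 : (Finset.univ.filter fun x => decide (x ≠ i) = true).card
        = (Finset.univ.erase i).card := by
      congr 1
      ext a
      simp [Finset.mem_erase, and_comm]
    rw [h2, Finset.card_erase_of_mem (Finset.mem_univ i), Finset.card_univ,
      Fintype.card_fin]
    rfl
  have heven : Even (p + q - 1) := by
    obtain ⟨k, hk⟩ := hn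
    exact ⟨k, by omega⟩
  rw [pseudoscalar, comm_gen_prod p q i, hlen, heven.neg_one_pow, one_smul]

lemma pseudo_comm_iota (hn : Odd (p + q)) (v : Fin (p + q + 0) → ℝ) :
    pseudoscalar p q 0 * ι (Qf p q 0) v = ι (Qf p q 0) v * pseudoscalar p q 0 := by
  rw [iota_eq_sum, Finset.mul_sum, Finset.sum_mul]
  exact Finset.sum_congr rfl fun i _ => by
    rw [mul_smul_comm, smul_mul_assoc, gen_comm_pseudo p q hn i]

end Aux11

/-- In non-degenerate `Cl(p,q,0)` with `n = p + q` odd, the centralizer of the grade-1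
subspace is the direct sum of the scalars and the grade-`n` subspace. -/
theorem stmt11 (p q : ℕ) (hn : Odd (p + q)) (X : CliffordAlgebra (Qf p q 0)) :
    (∀ v : Fin (p + q + 0) → ℝ, X * ι (Qf p q 0) v = ι (Qf p q 0) v * X) ↔
      ∃ c d : ℝ, X = algebraMap ℝ (CliffordAlgebra (Qf p q 0)) c + d • pseudoscalar p q 0 := by
  constructor
  · intro h
    have hX := Aux11.sum_repr_bT p q X
    have hzero : ∀ T : Finset (Fin (p + q + 0)), T ≠ ∅ → T ≠ Finset.univ →
        (Aux11.BB p q).repr X T = 0 := by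
      intro T hT1 hT2
      obtain ⟨i, hi⟩ : ∃ i, Odd ((T.erase i).card) := by
        by_cases hc : Even T.card
        · obtain ⟨i, hi⟩ := Finset.nonempty_iff_ne_empty.2 hT1
          refine ⟨i, ?_⟩
          rw [Finset.card_erase_of_mem hi]
          have hpos : 0 < T.card := Finset.card_pos.2 ⟨i, hi⟩
          rw [Nat.odd_iff]
          rw [Nat.even_iff] at hc
          omega
        · obtain ⟨i, hi⟩ : ∃ i, i ∉ T := by
            by_contra hall
            push_neg at hall
            exact hT2 (Finset.eq_univ_iff_forall.2 hall)
          refine ⟨i, ?_⟩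
          rw [Finset.erase_eq_of_notMem hi]
          rw [Nat.odd_iff]
          rw [Nat.even_iff] at hc
          omega
      have e1 : gen p q 0 i * X
          = ∑ T', ((Aux11.BB p q).repr X T' * (-1:ℝ) ^ ((T'.erase i).card)) •
            (Aux11.bT p q T' * gen p q 0 i) := by
        conv_lhs => rw [← hX]
        rw [Finset.mul_sum]
        refine Finset.sum_congr rfl fun T' _ => ?_
        rw [mul_smul_comm, Aux11.gen_mul_bT, smul_smul]
      have e2 : X * gen p q 0 i
          = ∑ T', ((Aux11.BB p q).repr X T') • (Aux11.bT p q T' * gen p q 0 i) := by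
        conv_lhs => rw [← hX]
        rw [Finset.sum_mul]
        exact Finset.sum_congr rfl fun T' _ => by rw [smul_mul_assoc]
      have e3 : (∑ T', ((Aux11.BB p q).repr X T' * (-1:ℝ) ^ ((T'.erase i).card)) •
            (Aux11.bT p q T' * gen p q 0 i))
          = ∑ T', ((Aux11.BB p q).repr X T') • (Aux11.bT p q T' * gen p q 0 i) := by
        rw [← e1, ← e2]
        exact (h (Pi.single i 1)).symm
      have e4 := congrArg (· * gen p q 0 i) e3
      rw [Aux11.sum_mul_geni, Aux11.sum_mul_geni] at e4
      have e5 := congrArg (fun z => (Aux11.BB p q).repr z T) e4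
      rw [Aux11.repr_sum, Aux11.repr_sum, hi.neg_one_pow] at e5
      have e6 : (Aux11.BB p q).repr X T * Aux11.wt p q i = 0 := by
        linear_combination (-(1:ℝ)/2) * e5
      rcases mul_eq_zero.1 e6 with h0 | h0
      · exact h0
      · exact absurd h0 (Aux11.wt_ne_zero p q i)
    refine ⟨(Aux11.BB p q).repr X ∅, (Aux11.BB p q).repr X Finset.univ, ?_⟩
    have hne : (∅ : Finset (Fin (p + q + 0))) ≠ Finset.univ := by
      have hpos : 0 < p + q := by
        rcases hn with ⟨k, hk⟩
        omega
      intro hc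
      have hm : (⟨0, hpos⟩ : Fin (p + q + 0)) ∈ (∅ : Finset (Fin (p + q + 0))) := by
        rw [hc]
        exact Finset.mem_univ _
      simp at hm
    have hsum : X = ∑ T ∈ ({∅, Finset.univ} : Finset (Finset (Fin (p + q + 0)))),
        (Aux11.BB p q).repr X T • Aux11.bT p q T := by
      conv_lhs => rw [← hX]
      refine (Finset.sum_subset (Finset.subset_univ _) ?_).symm
      intro T _ hT
      rw [Finset.mem_insert, Finset.mem_singleton] at hT
      push_neg at hT
      rw [hzero T hT.1.ne_empty hT.2, zero_smul]
    conv_lhs => rw [hsum]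
    rw [Finset.sum_pair hne, Aux11.bT_empty, Aux11.bT_univ,
      Algebra.algebraMap_eq_smul_one]
  · rintro ⟨c, d, rfl⟩ v
    rw [add_mul, mul_add, smul_mul_assoc, mul_smul_comm,
      Aux11.pseudo_comm_iota p q hn v]
    congr 1
    exact Algebra.commutes c _
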